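/- Let n, q be positive integers with 2 ≤ q < n and 2q > n, and let α₁, ..., α_{n+1-q} ∈ (0,1] with ∏ᵢ αᵢ = α. Then the n × n matrix A = (D ⊕ I_{q-1})C_n + ((I_{n+1-q} - D) ⊕ 0_{q-1})C_n^{n-q+1}, where D = diag(α₁,...,α_{n+1-q}), is stochastic and has characteristic polynomial t^n - (1-α)t^{n-q} - α. -/

import Mathlib

open Polynomial Matrix

/-- The `n × n` cyclic permutation matrix with 1s in positions `(i, i+1 mod n)`. -/
def Cmat (n : ℕ) : Matrix (Fin n) (Fin n) ℝ :=
  fun i j => if (j : ℕ) = ((i : ℕ) + 1) % n then 1 else 0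

/-- A matrix is (row) stochastic: nonnegative entries and all row sums equal to 1. -/
def IsStochastic {n : ℕ} (A : Matrix (Fin n) (Fin n) ℝ) : Prop :=
  (∀ i j, 0 ≤ A i j) ∧ ∀ i, ∑ j, A i j = 1

lemma sum_ite_fin {M : Type*} [AddCommMonoid M] {n : ℕ} (c : ℕ) (hc : c < n) (f : Fin n → M) :
    ∑ j : Fin n, (if (j:ℕ) = c then f j else 0) = f ⟨c, hc⟩ := by
  have h1 : ∑ j : Fin n, (if j = (⟨c,hc⟩ : Fin n) then f j else 0) = f ⟨c,hc⟩ := by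
    rw [Finset.sum_ite_eq' Finset.univ (⟨c,hc⟩ : Fin n) f]
    exact if_pos (Finset.mem_univ _)
  rw [← h1]
  apply Finset.sum_congr rfl
  intro j _
  have he : ((j:ℕ) = c) = (j = ⟨c,hc⟩) := by
    apply propext
    exact ⟨fun h => Fin.ext h, fun h => by rw [h]⟩
  exact if_congr (iff_of_eq he) rfl rfl

lemma Cmat_pow_apply (n : ℕ) (hn : 0 < n) (k : ℕ) (i j : Fin n) :
    ((Cmat n)^k) i j = if (j:ℕ) = ((i:ℕ)+k) % n then 1 else 0 := by
  induction k generalizing j with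
  | zero =>
    simp [Matrix.one_apply, Fin.ext_iff, Nat.mod_eq_of_lt i.isLt, eq_comm]
  | succ k ih =>
    rw [pow_succ, Matrix.mul_apply]
    have hterm : ∀ l : Fin n, ((Cmat n)^k) i l * Cmat n l j
        = if (l:ℕ) = ((i:ℕ)+k) % n then Cmat n l j else 0 := by
      intro l
      rw [ih l, ite_mul, one_mul, zero_mul]
    rw [Finset.sum_congr rfl (fun l _ => hterm l),
      sum_ite_fin (((i:ℕ)+k) % n) (Nat.mod_lt _ hn) (fun l => Cmat n l j)]
    show (if (j:ℕ) = ((((i:ℕ)+k) % n) + 1) % n then (1:ℝ) else 0) = _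
    rw [Nat.mod_add_mod, Nat.add_assoc]


lemma det_companion {R : Type*} [CommRing R] : ∀ (n : ℕ) (x : R) (c : Fin n → R),
    (Matrix.of fun i j : Fin n => (if i = j then x else 0) -
      (if (i:ℕ)+1 = n then c j else if (j:ℕ) = (i:ℕ)+1 then 1 else 0)).det
    = x^n - ∑ j, c j * x^(j:ℕ)
  | 0, x, c => by simp
  | 1, x, c => by simp [Matrix.det_fin_one]
  | (n+2), x, c => by
    set M := (Matrix.of fun i j : Fin (n+2) => (if i = j then x else 0) -
      (if (i:ℕ)+1 = n+2 then c j else if (j:ℕ) = (i:ℕ)+1 then 1 else 0)) with hM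
    rw [Matrix.det_succ_column_zero]
    have hsub : (Finset.univ : Finset (Fin (n+2))) =
        insert 0 (insert (Fin.last (n+1)) (Finset.univ \ {0, Fin.last (n+1)})) := by
      ext i
      simp only [Finset.mem_insert, Finset.mem_sdiff, Finset.mem_univ, true_and,
        Finset.mem_singleton, Finset.mem_insert]
      tauto
    conv_lhs => rw [hsub, Finset.sum_insert (by simp [Fin.ext_iff]),
      Finset.sum_insert (by simp)]
    have hrest : ∑ i ∈ Finset.univ \ {0, Fin.last (n+1)},
        (-1:R)^(i:ℕ) * M i 0 * (M.submatrix i.succAbove Fin.succ).det = 0 := by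
      apply Finset.sum_eq_zero
      intro i hi
      simp only [Finset.mem_sdiff, Finset.mem_univ, true_and, Finset.mem_insert,
        Finset.mem_singleton, not_or] at hi
      have h1 : (i:ℕ)+1 ≠ n+2 := fun h => hi.2 (by ext; simpa [Fin.last] using by omega)
      have h1' : (i:ℕ) ≠ n+1 := by omega
      have h2 : ¬ (i = (0 : Fin (n+2))) := hi.1
      have h3 : (0:ℕ) ≠ (i:ℕ)+1 := by omega
      have : M i 0 = 0 := by simp [hM, h1, h1', h2, h3]
      rw [this]; ring
    rw [hrest, add_zero]
    have hM00 : M 0 0 = x := by simp [hM]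
    have hminor0 : (M.submatrix (Fin.succAbove 0) Fin.succ) =
        (Matrix.of fun i j : Fin (n+1) => (if i = j then x else 0) -
          (if (i:ℕ)+1 = n+1 then c j.succ else if (j:ℕ) = (i:ℕ)+1 then 1 else 0)) := by
      ext i j
      simp only [Matrix.submatrix_apply, Fin.succAbove_zero, hM, Matrix.of_apply,
        Fin.succ_inj, Fin.val_succ]
      have e1 : ((i:ℕ)+1+1 = n+2) ↔ ((i:ℕ)+1 = n+1) := by omega
      have e2 : ((j:ℕ)+1 = (i:ℕ)+1+1) ↔ ((j:ℕ) = (i:ℕ)+1) := by omega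
      rw [if_congr e1 rfl rfl, if_congr e2 rfl rfl]
    have hMl0 : M (Fin.last (n+1)) 0 = - c 0 := by
      simp [hM, Fin.last, Fin.ext_iff]
    have hminorl : (M.submatrix (Fin.last (n+1)).succAbove Fin.succ).det = (-1:R)^(n+1) := by
      have hd : ∀ i j : Fin (n+1), i < j →
          (M.submatrix (Fin.last (n+1)).succAbove Fin.succ) i j = 0 := by
        intro i j hij
        simp only [Matrix.submatrix_apply, Fin.succAbove_last, hM, Matrix.of_apply]
        have h1 : ¬ (i.castSucc = j.succ) := by
          rw [Fin.ext_iff]; simp; omega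
        have h2 : (i:ℕ)+1 ≠ n+2 := by have := i.isLt; omega
        have h3 : (j:ℕ)+1 ≠ (i:ℕ)+1 := by omega
        simp [h1, h2, h3, Fin.val_succ, Fin.coe_castSucc, show (i:ℕ) ≠ n+1 by have := i.isLt; omega,
          show (j:ℕ) ≠ (i:ℕ) by omega]
      have hdet := Matrix.det_of_lowerTriangular
        (M.submatrix (Fin.last (n+1)).succAbove Fin.succ)
        (by intro i j h; exact hd i j (by simpa using h))
      have hdiag : ∀ i : Fin (n+1),
          (M.submatrix (Fin.last (n+1)).succAbove Fin.succ) i i = -1 := by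
        intro i
        simp only [Matrix.submatrix_apply, Fin.succAbove_last, hM, Matrix.of_apply]
        have h1 : ¬ (i.castSucc = i.succ) := by rw [Fin.ext_iff]; simp
        have h2 : (i:ℕ)+1 ≠ n+2 := by have := i.isLt; omega
        simp [h1, h2, show (i:ℕ) ≠ n+1 by have := i.isLt; omega]
      rw [hdet, Finset.prod_congr rfl (fun i _ => hdiag i), Finset.prod_const]
      simp
    rw [hM00, hMl0, hminor0, det_companion (n+1) x (fun j => c j.succ), hminorl]
    have hsum : ∑ j : Fin (n+2), c j * x^(j:ℕ)
        = c 0 + ∑ j : Fin (n+1), c j.succ * x^((j:ℕ)+1) := by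
      rw [Fin.sum_univ_succ]; simp
    rw [hsum]
    have hmul : x * (x^(n+1) - ∑ j : Fin (n+1), c j.succ * x^(j:ℕ))
        = x^(n+2) - ∑ j : Fin (n+1), c j.succ * x^((j:ℕ)+1) := by
      rw [mul_sub, Finset.mul_sum, ← pow_succ']
      congr 1
      apply Finset.sum_congr rfl; intro j _; ring
    simp only [Fin.val_zero, pow_zero, one_mul, Fin.val_last, hmul]
    have hsq : (-1:R)^(n+1)*(-1:R)^(n+1) = 1 := by
      rw [← pow_add]
      exact Even.neg_one_pow ⟨n+1, by ring⟩
    linear_combination (-(c 0)) * hsq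

theorem stmt4 (n q : ℕ) (hq : 2 ≤ q) (hqn : q < n) (h2q : n < 2 * q)
    (α : ℝ) (αv : Fin (n + 1 - q) → ℝ) (hαv : ∀ i, αv i ∈ Set.Ioc (0 : ℝ) 1)
    (hprod : ∏ i, αv i = α) :
    let g : Fin n → ℝ := fun i => if h : (i : ℕ) < n + 1 - q then αv ⟨(i : ℕ), h⟩ else 1
    let A := Matrix.diagonal g * Cmat n + (1 - Matrix.diagonal g) * (Cmat n) ^ (n - q + 1)
    IsStochastic A ∧ Matrix.charpoly A = X ^ n - C (1 - α) * X ^ (n - q) - C α := by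
  intro g A
  have hn : 0 < n := by omega
  set m : ℕ := n - q + 1 with hmdef
  have hm : m = n + 1 - q := by omega
  have hm2 : 2 ≤ m := by omega
  have hmlt : m < n := by omega
  have h2m : 2 * m ≤ n + 1 := by omega
  have hmq : m ≤ q := by omega
  -- basic facts about g
  have hgdef : ∀ i : Fin n, g i = if h : (i : ℕ) < n + 1 - q then αv ⟨(i : ℕ), h⟩ else 1 :=
    fun i => rfl
  have hg : ∀ i : Fin n, 0 < g i ∧ g i ≤ 1 := by
    intro i
    rw [hgdef]
    by_cases h : (i : ℕ) < n + 1 - q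
    · rw [dif_pos h]; exact ⟨(hαv _).1, (hαv _).2⟩
    · rw [dif_neg h]; exact ⟨one_pos, le_refl 1⟩
  -- entry formula for A
  have hA : ∀ i j : Fin n, A i j =
      (if (j:ℕ) = ((i:ℕ)+1) % n then g i else 0) +
      (if (j:ℕ) = ((i:ℕ)+m) % n then 1 - g i else 0) := by
    intro i j
    show (Matrix.diagonal g * Cmat n + (1 - Matrix.diagonal g) * (Cmat n) ^ (n-q+1)) i j = _
    rw [Matrix.add_apply, Matrix.sub_mul, Matrix.one_mul, Matrix.sub_apply,
      Matrix.diagonal_mul, Matrix.diagonal_mul, Cmat_pow_apply n hn (n-q+1) i j]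
    show g i * (if (j:ℕ) = ((i:ℕ)+1) % n then (1:ℝ) else 0) +
      ((if (j:ℕ) = ((i:ℕ)+(n-q+1)) % n then (1:ℝ) else 0) -
        g i * (if (j:ℕ) = ((i:ℕ)+(n-q+1)) % n then (1:ℝ) else 0)) = _
    split_ifs <;> ring
  constructor
  · constructor
    · intro i j
      rw [hA i j]
      have h1 := (hg i).1
      have h2 := (hg i).2
      split_ifs <;> simp <;> linarith
    · intro i
      rw [Finset.sum_congr rfl (fun j _ => hA i j), Finset.sum_add_distrib,
        sum_ite_fin (((i:ℕ)+1) % n) (Nat.mod_lt _ hn) (fun _ => g i),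
        sum_ite_fin (((i:ℕ)+m) % n) (Nat.mod_lt _ hn) (fun _ => 1 - g i)]
      ring
  · -- charpoly
    set aN : ℕ → ℝ := fun i => if h : i < n + 1 - q then αv ⟨i, h⟩ else 1 with haN
    have haN1 : ∀ i, m ≤ i → aN i = 1 := by
      intro i hi
      simp only [haN]
      exact dif_neg (by omega)
    have haNpos : ∀ i, 0 < aN i := by
      intro i
      simp only [haN]
      by_cases h : i < n + 1 - q
      · rw [dif_pos h]; exact (hαv _).1
      · rw [dif_neg h]; exact one_pos
    set β : ℕ → ℝ := fun k => ∏ i ∈ Finset.range k, aN i with hβ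
    have hβpos : ∀ k, 0 < β k := fun k => Finset.prod_pos (fun i _ => haNpos i)
    have hβne : ∀ k, β k ≠ 0 := fun k => ne_of_gt (hβpos k)
    have hβsucc : ∀ k, β (k+1) = β k * aN k := fun k => Finset.prod_range_succ aN k
    have hβm : β m = α := by
      rw [← hprod]
      simp only [hβ]
      rw [hm, ← Fin.prod_univ_eq_prod_range aN (n+1-q)]
      apply Finset.prod_congr rfl
      intro i _
      simp only [haN]
      rw [dif_pos i.isLt]
    set e : ℕ → (Fin n → ℝ) := fun k => Pi.single (⟨k % n, Nat.mod_lt _ hn⟩ : Fin n) (1:ℝ) with he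
    have heval : ∀ (k : ℕ) (j : Fin n), e k j = if (j:ℕ) = k % n then 1 else 0 := by
      intro k j
      simp only [he]
      rw [Pi.single_apply]
      exact if_congr (by simp [Fin.ext_iff]) rfl rfl
    have hemod : ∀ k, e (k % n) = e k := by
      intro k
      have hidx : (⟨k % n % n, Nat.mod_lt _ hn⟩ : Fin n) = ⟨k % n, Nat.mod_lt _ hn⟩ := by
        apply Fin.ext
        show k % n % n = k % n
        exact Nat.mod_mod_of_dvd k (dvd_refl n)
      simp only [he, hidx]
    have hAe : ∀ (r : ℕ) (hr : r < n),
        (e r) ᵥ* A = aN r • e (r+1) + (1 - aN r) • e (r+m) := by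
      intro r hr
      have hidx : (⟨r % n, Nat.mod_lt _ hn⟩ : Fin n) = ⟨r, hr⟩ := by
        apply Fin.ext
        show r % n = r
        exact Nat.mod_eq_of_lt hr
      have her : e r = Pi.single (⟨r, hr⟩ : Fin n) (1:ℝ) := by
        simp only [he, hidx]
      rw [her, Matrix.single_one_vecMul]
      funext j
      rw [show A.row ⟨r, hr⟩ j = A ⟨r, hr⟩ j from rfl, hA]
      have hgr : g ⟨r, hr⟩ = aN r := rfl
      simp only [Pi.add_apply, Pi.smul_apply, smul_eq_mul, heval, hgr, Fin.val_mk]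
      split_ifs <;> ring
    set w : ℕ → (Fin n → ℝ) := fun j =>
      if j < q then e (m + j)
      else β (j - q + 1) • e (j - q + 1) + (1 - β (j - q + 1)) • e (j + m - q) with hw
    have hwlt : ∀ j, j < q → w j = e (m + j) := by
      intro j hj
      simp only [hw]
      rw [if_pos hj]
    have hwge : ∀ j, q ≤ j → w j = β (j - q + 1) • e (j - q + 1)
        + (1 - β (j - q + 1)) • e (j + m - q) := by
      intro j hj
      simp only [hw]
      rw [if_neg (by omega)]
    have hwstep : ∀ j : ℕ, j + 1 < n → (w j) ᵥ* A = w (j+1) := by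
      intro j hj
      by_cases hc1 : j + 1 < q
      · rw [hwlt j (by omega), hwlt (j+1) (by omega)]
        rw [hAe (m+j) (by omega), haN1 (m+j) (by omega)]
        simp only [one_smul, sub_self, zero_smul, add_zero]
        rw [Nat.add_assoc]
      · by_cases hc2 : j + 1 = q
        · rw [hwlt j (by omega), hwge (j+1) (by omega)]
          have hen : e (m+j) = e 0 := by
            rw [show m + j = n by omega, ← hemod n, Nat.mod_self]
          rw [hen, hAe 0 hn]
          rw [show j + 1 - q + 1 = 1 by omega, show j + 1 + m - q = m by omega]
          have hβ1 : β 1 = aN 0 := by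
            rw [hβsucc 0, show β 0 = 1 from Finset.prod_range_zero aN, one_mul]
          rw [hβ1, Nat.zero_add 1, Nat.zero_add m]
        · have hjq : q ≤ j := by omega
          rw [hwge j hjq, hwge (j+1) (by omega)]
          rw [Matrix.add_vecMul, Matrix.smul_vecMul, Matrix.smul_vecMul]
          rw [hAe (j - q + 1) (by omega), hAe (j + m - q) (by omega),
            haN1 (j + m - q) (by omega)]
          rw [show j + 1 - q + 1 = j - q + 1 + 1 by omega,
            show j + 1 + m - q = j - q + 1 + m by omega,
            show j + m - q + 1 = j - q + 1 + m by omega]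
          rw [hβsucc (j - q + 1)]
          funext x
          simp only [Pi.add_apply, Pi.smul_apply, smul_eq_mul]
          ring
    have hwlast : (w (n-1)) ᵥ* A = α • w 0 + (1 - α) • w (m-1) := by
      rw [hwge (n-1) (by omega), hwlt 0 (by omega), hwlt (m-1) (by omega)]
      rw [show n - 1 - q + 1 = m - 1 by omega, show n - 1 + m - q = 2*m - 2 by omega]
      rw [Matrix.add_vecMul, Matrix.smul_vecMul, Matrix.smul_vecMul]
      rw [hAe (m-1) (by omega), hAe (2*m-2) (by omega), haN1 (2*m-2) (by omega)]
      rw [show m - 1 + 1 = m by omega, show m - 1 + m = 2*m - 1 by omega,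
        show 2*m - 2 + 1 = 2*m - 1 by omega, show m + 0 = m by omega,
        show m + (m-1) = 2*m - 1 by omega]
      have hβlast : β (m-1) * aN (m-1) = α := by
        rw [← hβsucc (m-1), show m - 1 + 1 = m by omega, hβm]
      funext x
      simp only [Pi.add_apply, Pi.smul_apply, smul_eq_mul]
      linear_combination (e m x - e (2*m-1) x) * hβlast
    set P : Matrix (Fin n) (Fin n) ℝ := Matrix.of (fun j i : Fin n => w (j:ℕ) i) with hP
    set K : Matrix (Fin n) (Fin n) ℝ := Matrix.of (fun j k : Fin n =>
      if (j:ℕ) + 1 = n then (if (k:ℕ) = 0 then α else 0) + (if (k:ℕ) = m - 1 then 1 - α else 0)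
      else if (k:ℕ) = (j:ℕ) + 1 then 1 else 0) with hK
    set Q : Matrix (Fin n) (Fin n) ℝ := Matrix.of (fun i j : Fin n =>
      if (i:ℕ) = 0 then (if (j:ℕ) = q - 1 then 1 else 0)
      else if (i:ℕ) < m then
        (if (j:ℕ) = q - 1 + (i:ℕ) then 1 / β (i:ℕ) else 0) +
        (if (j:ℕ) = (i:ℕ) - 1 then -((1 - β (i:ℕ)) / β (i:ℕ)) else 0)
      else (if (j:ℕ) = (i:ℕ) - m then 1 else 0)) with hQ
    have hPA : P * A = K * P := by
      ext j i
      rw [Matrix.mul_apply, Matrix.mul_apply]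
      have hjlt := j.isLt
      have hL : ∑ k, P j k * A k i = ((w (j:ℕ)) ᵥ* A) i := rfl
      rw [hL]
      by_cases hj : (j:ℕ) + 1 = n
      · have hKj : ∀ k : Fin n, K j k =
            (if (k:ℕ) = 0 then α else 0) + (if (k:ℕ) = m-1 then 1-α else 0) := by
          intro k
          simp only [hK, Matrix.of_apply]
          rw [if_pos hj]
        rw [Finset.sum_congr rfl (fun k _ => by
          rw [hKj k, add_mul, ite_mul, ite_mul, zero_mul])]
        rw [Finset.sum_add_distrib,
          sum_ite_fin 0 hn (fun k : Fin n => α * P k i),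
          sum_ite_fin (m-1) (by omega) (fun k : Fin n => (1-α) * P k i)]
        have hwj : (w (j:ℕ)) ᵥ* A = α • w 0 + (1 - α) • w (m-1) := by
          rw [show (j:ℕ) = n - 1 by omega]
          exact hwlast
        rw [hwj]
        simp only [Pi.add_apply, Pi.smul_apply, smul_eq_mul]
        rfl
      · have hKj : ∀ k : Fin n, K j k = (if (k:ℕ) = (j:ℕ)+1 then 1 else 0) := by
          intro k
          simp only [hK, Matrix.of_apply]
          rw [if_neg hj]
        rw [Finset.sum_congr rfl (fun k _ => by rw [hKj k, boole_mul])]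
        rw [sum_ite_fin ((j:ℕ)+1) (by omega) (fun k : Fin n => P k i)]
        rw [hwstep (j:ℕ) (by omega)]
        rfl
    have hQP : Q * P = 1 := by
      ext i j
      rw [Matrix.mul_apply, Matrix.one_apply]
      have hilt := i.isLt
      by_cases hi0 : (i:ℕ) = 0
      · have hQi : ∀ k : Fin n, Q i k = (if (k:ℕ) = q-1 then 1 else 0) := by
          intro k
          simp only [hQ, Matrix.of_apply]
          rw [if_pos hi0]
        rw [Finset.sum_congr rfl (fun k _ => by rw [hQi k, boole_mul]),
          sum_ite_fin (q-1) (by omega) (fun k : Fin n => P k j)]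
        have hPe : P (⟨q-1, by omega⟩ : Fin n) j = e n j := by
          show w (q-1) j = e n j
          rw [hwlt (q-1) (by omega), show m + (q-1) = n by omega]
        rw [hPe, heval, Nat.mod_self]
        exact if_congr (by rw [Fin.ext_iff, hi0, eq_comm]) rfl rfl
      · by_cases him : (i:ℕ) < m
        · have hQi : ∀ k : Fin n, Q i k =
              (if (k:ℕ) = q-1+(i:ℕ) then 1/β (i:ℕ) else 0) +
              (if (k:ℕ) = (i:ℕ)-1 then -((1-β (i:ℕ))/β (i:ℕ)) else 0) := by
            intro k
            simp only [hQ, Matrix.of_apply]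
            rw [if_neg hi0, if_pos him]
          rw [Finset.sum_congr rfl (fun k _ => by
            rw [hQi k, add_mul, ite_mul, ite_mul, zero_mul]),
            Finset.sum_add_distrib,
            sum_ite_fin (q-1+(i:ℕ)) (by omega) (fun k : Fin n => (1/β (i:ℕ)) * P k j),
            sum_ite_fin ((i:ℕ)-1) (by omega)
              (fun k : Fin n => -((1-β (i:ℕ))/β (i:ℕ)) * P k j)]
          have e1 : P (⟨q-1+(i:ℕ), by omega⟩ : Fin n) j
              = β (i:ℕ) * e (i:ℕ) j + (1 - β (i:ℕ)) * e ((i:ℕ)+m-1) j := by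
            show w (q-1+(i:ℕ)) j = _
            rw [hwge (q-1+(i:ℕ)) (by omega)]
            rw [show q-1+(i:ℕ)-q+1 = (i:ℕ) by omega, show q-1+(i:ℕ)+m-q = (i:ℕ)+m-1 by omega]
            simp only [Pi.add_apply, Pi.smul_apply, smul_eq_mul]
          have e2 : P (⟨(i:ℕ)-1, by omega⟩ : Fin n) j = e ((i:ℕ)+m-1) j := by
            show w ((i:ℕ)-1) j = _
            rw [hwlt ((i:ℕ)-1) (by omega), show m + ((i:ℕ)-1) = (i:ℕ)+m-1 by omega]
          rw [e1, e2]
          have hei : e (i:ℕ) j = if i = j then 1 else 0 := by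
            rw [heval, Nat.mod_eq_of_lt hilt]
            exact if_congr (by rw [Fin.ext_iff, eq_comm]) rfl rfl
          rw [← hei]
          have hβi := hβne (i:ℕ)
          field_simp
          ring
        · have hQi : ∀ k : Fin n, Q i k = (if (k:ℕ) = (i:ℕ)-m then 1 else 0) := by
            intro k
            simp only [hQ, Matrix.of_apply]
            rw [if_neg hi0, if_neg him]
          rw [Finset.sum_congr rfl (fun k _ => by rw [hQi k, boole_mul]),
            sum_ite_fin ((i:ℕ)-m) (by omega) (fun k : Fin n => P k j)]
          have hPe : P (⟨(i:ℕ)-m, by omega⟩ : Fin n) j = e (i:ℕ) j := by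
            show w ((i:ℕ)-m) j = _
            rw [hwlt ((i:ℕ)-m) (by omega), show m + ((i:ℕ)-m) = (i:ℕ) by omega]
          rw [hPe, heval, Nat.mod_eq_of_lt hilt]
          exact if_congr (by rw [Fin.ext_iff, eq_comm]) rfl rfl
    have hAeq : A = Q * K * P := by
      calc A = (Q * P) * A := by rw [hQP, Matrix.one_mul]
        _ = Q * (P * A) := by rw [Matrix.mul_assoc]
        _ = Q * (K * P) := by rw [hPA]
        _ = Q * K * P := by rw [← Matrix.mul_assoc]
    have hQPmap : Q.map (Polynomial.C : ℝ → ℝ[X]) * P.map (Polynomial.C : ℝ → ℝ[X]) = 1 := by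
      rw [← Matrix.map_mul (f := (Polynomial.C : ℝ →+* ℝ[X])), hQP,
        Matrix.map_one _ (map_zero _) (map_one _)]
    have hscalar : Matrix.scalar (Fin n) (X : ℝ[X]) = (X : ℝ[X]) • (1 : Matrix (Fin n) (Fin n) ℝ[X]) := by
      rw [Matrix.scalar_apply, Matrix.smul_one_eq_diagonal]
    have h1 : Q.map (Polynomial.C : ℝ → ℝ[X]) * charmatrix K * P.map (Polynomial.C : ℝ → ℝ[X])
        = charmatrix (Q * K * P) := by
      rw [charmatrix, charmatrix]
      simp only [RingHom.mapMatrix_apply, RingHom.coe_coe]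
      rw [Matrix.mul_sub, Matrix.sub_mul]
      congr 1
      · rw [hscalar, Matrix.mul_smul, Matrix.mul_one, Matrix.smul_mul, hQPmap]
      · rw [← Matrix.map_mul (f := (Polynomial.C : ℝ →+* ℝ[X])),
          ← Matrix.map_mul (f := (Polynomial.C : ℝ →+* ℝ[X]))]
    have hcharA : Matrix.charpoly A = Matrix.charpoly K := by
      show (charmatrix A).det = (charmatrix K).det
      rw [hAeq, ← h1, Matrix.det_mul, Matrix.det_mul]
      have hdets : (Q.map (Polynomial.C : ℝ → ℝ[X])).det
          * (P.map (Polynomial.C : ℝ → ℝ[X])).det = 1 := by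
        rw [← Matrix.det_mul, hQPmap, Matrix.det_one]
      linear_combination (charmatrix K).det * hdets
    have hcharK : Matrix.charpoly K = X^n - C (1-α) * X^(n-q) - C α := by
      show (charmatrix K).det = _
      have hcm : charmatrix K = Matrix.of (fun i j : Fin n =>
          (if i = j then (X:ℝ[X]) else 0) -
          (if (i:ℕ)+1 = n then
            Polynomial.C ((if (j:ℕ)=0 then α else 0) + (if (j:ℕ)=m-1 then 1-α else 0))
           else if (j:ℕ) = (i:ℕ)+1 then 1 else 0)) := by
        ext i j
        rw [charmatrix_apply, Matrix.diagonal_apply, Matrix.of_apply]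
        have hKij : Polynomial.C (K i j) = (if (i:ℕ)+1 = n then
            Polynomial.C ((if (j:ℕ)=0 then α else 0) + (if (j:ℕ)=m-1 then 1-α else 0))
            else if (j:ℕ) = (i:ℕ)+1 then (1:ℝ[X]) else 0) := by
          simp only [hK, Matrix.of_apply]
          by_cases h : (i:ℕ)+1 = n
          · rw [if_pos h, if_pos h]
          · rw [if_neg h, if_neg h]
            by_cases h2 : (j:ℕ) = (i:ℕ)+1
            · rw [if_pos h2, if_pos h2, _root_.map_one]
            · rw [if_neg h2, if_neg h2, _root_.map_zero]
        rw [hKij]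
      rw [hcm, det_companion n X (fun k : Fin n =>
        Polynomial.C ((if (k:ℕ)=0 then α else 0) + (if (k:ℕ)=m-1 then 1-α else 0)))]
      have hterm : ∀ j : Fin n,
          Polynomial.C ((if (j:ℕ)=0 then α else 0) + (if (j:ℕ)=m-1 then 1-α else 0)) * X^(j:ℕ)
          = (if (j:ℕ)=0 then Polynomial.C α * X^(j:ℕ) else 0)
            + (if (j:ℕ)=m-1 then Polynomial.C (1-α) * X^(j:ℕ) else 0) := by
        intro j
        rw [map_add, add_mul]
        congr 1 <;> rw [apply_ite Polynomial.C, map_zero, ite_mul, zero_mul]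
      rw [Finset.sum_congr rfl (fun j _ => hterm j), Finset.sum_add_distrib,
        sum_ite_fin 0 hn (fun j : Fin n => Polynomial.C α * X^(j:ℕ)),
        sum_ite_fin (m-1) (by omega) (fun j : Fin n => Polynomial.C (1-α) * X^(j:ℕ))]
      have hcoe0 : ((⟨0, hn⟩ : Fin n) : ℕ) = 0 := rfl
      have hcoem : ((⟨m-1, by omega⟩ : Fin n) : ℕ) = m-1 := rfl
      rw [hcoe0, hcoem, pow_zero, mul_one, show m - 1 = n - q by omega]
      ring
    rw [hcharA, hcharK]
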